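/- Let i ∈ {0,1} and let G = (V, lab, args, r, Sc) be a λ-ho-term-graph over Σλ^i. For every vertex w ∈ V whose set of binders bds(w) := { v ∈ V(λ) : w ∈ Sc(v) } is nonempty, one can write bds(w) = {v₀, …, v_n} for abstraction vertices v₀, …, v_n such that the scopes are strictly linearly nested: Sc(v_n) ⊊ Sc(v_{n−1}) ⊊ … ⊊ Sc(v₀). -/

import Mathlib

/-! Common framework: term graphs over a signature, homomorphisms, bisimulations,
    access paths, λ-ho-term-graphs, λ-ap-ho-term-graphs, λ-term-graphs with
    scope delimiters, and the translation constructions. -/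

inductive Lab3 : Type
  | app | lam | var
  deriving DecidableEq

/-- Arity function of the signature Σλ^i = {@, λ, 0} with ar(@)=2, ar(λ)=1, ar(0)=i. -/
def ar3 (i : ℕ) : Lab3 → ℕ
  | .app => 2
  | .lam => 1
  | .var => i

inductive Lab4 : Type
  | app | lam | var | del
  deriving DecidableEq

/-- Arity function of Σλ^{i,j} = {@, λ, 0, S} with ar(@)=2, ar(λ)=1, ar(0)=i, ar(S)=j. -/
def ar4 (i j : ℕ) : Lab4 → ℕ
  | .app => 2
  | .lam => 1
  | .var => i
  | .del => j

def lab3to4 : Lab3 → Lab4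
  | .app => .app
  | .lam => .lam
  | .var => .var

def lab4to3 : Lab4 → Lab3
  | .app => .app
  | .lam => .lam
  | .var => .var
  | .del => .var

/-- A term graph over a signature: vertex labelling, argument (successor) lists of
    length matching the arity of the label, a root, and every vertex reachable
    from the root. -/
structure TermGraph (L : Type) (ar : L → ℕ) (V : Type) where
  lab : V → L
  args : V → List V
  root : V
  args_len : ∀ v, (args v).length = ar (lab v)
  reach : ∀ v, Relation.ReflTransGen (fun a b => b ∈ args a) root v

namespace TermGraph

variable {L V : Type} {ar : L → ℕ}

/-- `G.Succ k w w'` : `w'` is the `k`-th successor of `w` (the edge w ↣_k w'). -/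
def Succ (G : TermGraph L ar V) (k : ℕ) (w w' : V) : Prop :=
  (G.args w)[k]? = some w'

/-- `G.Edge w w'` : `w'` is some successor of `w` (the relation ↣). -/
def Edge (G : TermGraph L ar V) (w w' : V) : Prop :=
  w' ∈ G.args w

/-- Reachability ↠ along edges. -/
def Reaches (G : TermGraph L ar V) (w w' : V) : Prop :=
  Relation.ReflTransGen G.Edge w w'

end TermGraph

/-- Homomorphism (functional bisimulation) of term graphs. -/
def IsHom {L V₁ V₂ : Type} {ar : L → ℕ} (h : V₁ → V₂)
    (G₁ : TermGraph L ar V₁) (G₂ : TermGraph L ar V₂) : Prop :=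
  (∀ v, G₂.lab (h v) = G₁.lab v) ∧
  (∀ v, G₂.args (h v) = (G₁.args v).map h) ∧
  h G₁.root = G₂.root

/-- Bisimulation between term graphs: a term graph on a set of pairs, rooted at the
    pair of roots, whose two projections are homomorphisms. -/
def Bisim {L V₁ V₂ : Type} {ar : L → ℕ}
    (G₁ : TermGraph L ar V₁) (G₂ : TermGraph L ar V₂) : Prop :=
  ∃ (S : Set (V₁ × V₂)) (R : TermGraph L ar S),
    (R.root : V₁ × V₂) = (G₁.root, G₂.root) ∧
    IsHom (fun x : S => x.val.1) R G₁ ∧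
    IsHom (fun x : S => x.val.2) R G₂

/-- An access path of a vertex `w`: a path from the root to `w` (with edge indices)
    that visits no vertex twice. -/
structure AccessPath {L V : Type} {ar : L → ℕ} (G : TermGraph L ar V) (w : V) where
  n : ℕ
  vs : Fin (n + 1) → V
  ks : Fin n → ℕ
  start : vs 0 = G.root
  finish : vs (Fin.last n) = w
  step : ∀ m : Fin n, G.Succ (ks m) (vs m.castSucc) (vs m.succ)
  inj : Function.Injective vs

/-- The conditions (root), (self), (nest), (closed), (scope)₀ and (for i = 1) (scope)₁
    on a scope function. -/
def ScopeConds (i : ℕ) {V : Type} (G : TermGraph Lab3 (ar3 i) V)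
    (Sc : V → Set V) : Prop :=
  (∀ v, G.lab v = .lam → G.root ∉ Sc v \ {v}) ∧
  (∀ v, G.lab v = .lam → v ∈ Sc v) ∧
  (∀ v₀ v₁, G.lab v₀ = .lam → G.lab v₁ = .lam → v₁ ∈ Sc v₀ \ {v₀} →
      Sc v₁ ⊆ Sc v₀ \ {v₀}) ∧
  (∀ v w wk k, G.lab v = .lam → G.Succ k w wk → wk ∈ Sc v \ {v} → w ∈ Sc v) ∧
  (∀ w, G.lab w = .var → ∃ v, G.lab v = .lam ∧ w ∈ Sc v \ {v}) ∧
  (i = 1 → ∀ w w₀, G.lab w = .var → G.Succ 0 w w₀ →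
      G.lab w₀ = .lam ∧ ∀ v, G.lab v = .lam → (w ∈ Sc v ↔ w₀ ∈ Sc v))

/-- λ-ho-term-graph over Σλ^i: a Σλ^i-term-graph endowed with a scope function. -/
structure LamHoTG (i : ℕ) (V : Type) extends TermGraph Lab3 (ar3 i) V where
  Sc : V → Set V
  conds : ScopeConds i toTermGraph Sc

/-- Correctness of an abstraction-prefix function for a Σλ^i-term-graph:
    (root), (λ), (@), (0)₀, and (for i = 1) (0)₁. -/
def CorrectAP (i : ℕ) {V : Type} (G : TermGraph Lab3 (ar3 i) V)
    (P : V → List V) : Prop :=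
  (P G.root = []) ∧
  (∀ w w₀, G.lab w = .lam → G.Succ 0 w w₀ → P w₀ <+: P w ++ [w]) ∧
  (∀ w wk k, G.lab w = .app → G.Succ k w wk → P wk <+: P w) ∧
  (∀ w, G.lab w = .var → P w ≠ []) ∧
  (i = 1 → ∀ w w₀, G.lab w = .var → G.Succ 0 w w₀ →
      G.lab w₀ = .lam ∧ P w₀ ++ [w₀] = P w)

/-- λ-ap-ho-term-graph over Σλ^i: a Σλ^i-term-graph endowed with a correct
    abstraction-prefix function. -/
structure LamApHoTG (i : ℕ) (V : Type) extends TermGraph Lab3 (ar3 i) V where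
  P : V → List V
  correct : CorrectAP i toTermGraph P

/-- `ScToP G Sc P` : the abstraction-prefix function `P` is the one obtained from the
    scope function `Sc` by the mapping A_i: for each vertex `w`, `P w` lists exactly
    the binders of `w` other than `w` itself, in order of strictly decreasing scopes. -/
def ScToP {i : ℕ} {V : Type} (G : TermGraph Lab3 (ar3 i) V)
    (Sc : V → Set V) (P : V → List V) : Prop :=
  ∀ w, (∀ v, v ∈ P w ↔ (G.lab v = .lam ∧ w ∈ Sc v ∧ v ≠ w)) ∧
    (P w).Chain' (fun a b => Sc b ⊂ Sc a)

/-- The scope function obtained from an abstraction-prefix function by the mapping B_i: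
    Sc(v) = { w | v occurs in P(w) } ∪ {v}. -/
def ScOfP {V : Type} (P : V → List V) : V → Set V :=
  fun v => {w | v ∈ P w} ∪ {v}

/-- Homomorphism of λ-ho-term-graphs (given by their underlying term graphs and
    scope functions). -/
def IsHoHom {i : ℕ} {V₁ V₂ : Type} (h : V₁ → V₂)
    (G₁ : TermGraph Lab3 (ar3 i) V₁) (Sc₁ : V₁ → Set V₁)
    (G₂ : TermGraph Lab3 (ar3 i) V₂) (Sc₂ : V₂ → Set V₂) : Prop :=
  IsHom h G₁ G₂ ∧ ∀ v, G₁.lab v = .lam → h '' Sc₁ v = Sc₂ (h v)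

/-- Homomorphism of λ-ap-ho-term-graphs (given by their underlying term graphs and
    abstraction-prefix functions). -/
def IsApHom {i : ℕ} {V₁ V₂ : Type} (h : V₁ → V₂)
    (G₁ : TermGraph Lab3 (ar3 i) V₁) (P₁ : V₁ → List V₁)
    (G₂ : TermGraph Lab3 (ar3 i) V₂) (P₂ : V₂ → List V₂) : Prop :=
  IsHom h G₁ G₂ ∧ ∀ v, (P₁ v).map h = P₂ (h v)

/-- Correctness of an abstraction-prefix function for a Σλ^{i,j}-term-graph:
    (root), (λ), (@), (0)₀, (0)₁ (for i = 1), (S)₁, and (S)₂ (for j = 2). -/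
def CorrectAP4 (i j : ℕ) {V : Type} (G : TermGraph Lab4 (ar4 i j) V)
    (P : V → List V) : Prop :=
  (P G.root = []) ∧
  (∀ w w₀, G.lab w = .lam → G.Succ 0 w w₀ → P w₀ = P w ++ [w]) ∧
  (∀ w wk k, G.lab w = .app → G.Succ k w wk → P wk = P w) ∧
  (∀ w, G.lab w = .var → P w ≠ []) ∧
  (i = 1 → ∀ w w₀, G.lab w = .var → G.Succ 0 w w₀ →
      G.lab w₀ = .lam ∧ P w₀ ++ [w₀] = P w) ∧
  (∀ w w₀, G.lab w = .del → G.Succ 0 w w₀ → ∃ v, P w₀ ++ [v] = P w) ∧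
  (j = 2 → ∀ w w₁, G.lab w = .del → G.Succ 1 w w₁ →
      G.lab w₁ = .lam ∧ P w₁ ++ [w₁] = P w)

/-- Vertex-set predicate of the construction G_i^j: original vertices (inl) together
    with scope-delimiter vertices (w, k, w', p) inserted along an edge w ↣_k w',
    one for each prefix p with P(w') < p ≤ P(w)·w (for λ-vertices w),
    resp. P(w') < p ≤ P(w) (for @-vertices w). -/
def GVP {i : ℕ} {V : Type} (G : TermGraph Lab3 (ar3 i) V) (P : V → List V) :
    V ⊕ (V × ℕ × V × List V) → Prop
  | .inl _ => True
  | .inr (w, k, w', p) =>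
      G.Succ k w w' ∧ P w' <+: p ∧ P w' ≠ p ∧
      ((G.lab w = .lam ∧ p <+: P w ++ [w]) ∨ (G.lab w = .app ∧ p <+: P w))

/-- Vertex set of the image of G_i^j. -/
def GVert {i : ℕ} {V : Type} (G : TermGraph Lab3 (ar3 i) V) (P : V → List V) : Type :=
  { x : V ⊕ (V × ℕ × V × List V) // GVP G P x }

/-- Labelling of the image of G_i^j: original labels on original vertices,
    `S` on the inserted delimiter vertices. -/
def GLab {i : ℕ} {V : Type} (G : TermGraph Lab3 (ar3 i) V) (P : V → List V)
    (x : GVert G P) : Lab4 :=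
  match x.val with
  | .inl w => lab3to4 (G.lab w)
  | .inr _ => .del

/-- The successor relation of the image of G_i^j (clauses as in the definition of
    the mapping G_i^j; for j = 2 the inserted S-vertices carry a 1-indexed back-link
    to the abstraction vertex whose extended scope they close). -/
def CSucc {i : ℕ} {V : Type} (j : ℕ) (G : TermGraph Lab3 (ar3 i) V) (P : V → List V)
    (k : ℕ) (x y : GVert G P) : Prop :=
  (∃ w wk, x.val = .inl w ∧ y.val = .inl wk ∧ G.Succ k w wk ∧
     (G.lab w = .var ∨ (G.lab w = .lam ∧ P wk = P w ++ [w]) ∨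
      (G.lab w = .app ∧ P wk = P w))) ∨
  (∃ w w₀, x.val = .inl w ∧ G.lab w = .lam ∧ G.Succ 0 w w₀ ∧ P w₀ ≠ P w ++ [w] ∧
     k = 0 ∧ y.val = .inr (w, 0, w₀, P w ++ [w])) ∨
  (∃ w wk, x.val = .inl w ∧ G.lab w = .app ∧ G.Succ k w wk ∧ P wk ≠ P w ∧
     y.val = .inr (w, k, wk, P w)) ∨
  (∃ w k' w' p v, x.val = .inr (w, k', w', p ++ [v]) ∧ k = 0 ∧ P w' ≠ p ∧
     y.val = .inr (w, k', w', p)) ∨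
  (∃ w k' w' v, x.val = .inr (w, k', w', P w' ++ [v]) ∧ k = 0 ∧ y.val = .inl w') ∨
  (j = 2 ∧ ∃ w k' w' p v, x.val = .inr (w, k', w', p ++ [v]) ∧ k = 1 ∧ y.val = .inl v)

/-- `IsGImage i j G P G'` : the Σλ^{i,j}-term-graph `G'` is the image of the
    λ-ap-ho-term-graph given by `G` and `P` under the mapping G_i^j. -/
def IsGImage (i j : ℕ) {V : Type} (G : TermGraph Lab3 (ar3 i) V) (P : V → List V)
    (G' : TermGraph Lab4 (ar4 i j) (GVert G P)) : Prop :=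
  (G'.root).val = .inl G.root ∧
  (∀ x, G'.lab x = GLab G P x) ∧
  (∀ k x y, G'.Succ k x y ↔ CSucc j G P k x y)

/-- One step along the 0-indexed edge of a scope-delimiter vertex. -/
def DelStep {i j : ℕ} {V : Type} (G : TermGraph Lab4 (ar4 i j) V) (a b : V) : Prop :=
  G.lab a = .del ∧ G.Succ 0 a b

/-- The non-delimiter vertices of a Σλ^{i,j}-term-graph. -/
def NVert {i j : ℕ} {V : Type} (G : TermGraph Lab4 (ar4 i j) V) : Type :=
  { v : V // G.lab v ≠ .del }

/-- `IsNImage i j G P G' P'` : the Σλ^i-term-graph `G'` with abstraction-prefix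
    function `P'` is the image of the λ-term-graph `G` (with correct prefix
    function `P`) under the mapping N_i^j: S-vertices are deleted, labels and the
    prefix function are restricted, the root is kept, and w₀ ↣'_k w₁ holds iff
    w₁ is reached from the k-th successor of w₀ by passing through finitely many
    S-vertices along their 0-indexed edges. -/
def IsNImage (i j : ℕ) {V : Type} (G : TermGraph Lab4 (ar4 i j) V) (P : V → List V)
    (G' : TermGraph Lab3 (ar3 i) (NVert G)) (P' : NVert G → List (NVert G)) : Prop :=
  (G'.root).val = G.root ∧
  (∀ x : NVert G, G'.lab x = lab4to3 (G.lab x.val)) ∧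
  (∀ k (a b : NVert G), G'.Succ k a b ↔
      ∃ u, G.Succ k a.val u ∧ Relation.ReflTransGen (DelStep G) u b.val) ∧
  (∀ v : NVert G, (P' v).map Subtype.val = P v.val)

/-- A λ-term-graph over Σλ^{1,2} (given by `G` with correct prefix function `P`) is
    fully back-linked if the last vertex of the abstraction prefix of any vertex `w`
    is reachable from `w`. -/
def FullyBackLinked {V : Type} (G : TermGraph Lab4 (ar4 1 2) V)
    (P : V → List V) : Prop :=
  ∀ w v p, P w = p ++ [v] → G.Reaches w v

/-- Eager-scope: whenever P(w) = p·v there is a path from `w` to `v` which ends with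
    a 0-indexed edge from a variable vertex to `v`, and all of whose intermediate
    vertices have abstraction prefixes extending P(w). -/
def EagerScope {V : Type} (G : TermGraph Lab4 (ar4 1 2) V)
    (P : V → List V) : Prop :=
  ∀ w v p, P w = p ++ [v] →
    ∃ (n : ℕ) (u : Fin (n + 1) → V),
      u 0 = w ∧
      (∀ m : Fin n, G.Edge (u m.castSucc) (u m.succ)) ∧
      G.Succ 0 (u (Fin.last n)) v ∧
      G.lab (u (Fin.last n)) = .var ∧
      ∀ m : Fin (n + 1), m ≠ 0 → P w <+: P (u m)

section Aux

variable {i : ℕ} {V : Type} (G : LamHoTG i V)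

/-- Along a chain of edges, any binder of the last vertex either occurs on the
    chain or strictly scopes the starting vertex. -/
lemma lhotg_aux_mem : ∀ (l : List V) (a : V), List.Chain G.Edge a l →
    ∀ v, G.lab v = .lam → (a :: l).getLast (by simp) ∈ G.Sc v →
    v ∈ a :: l ∨ a ∈ G.Sc v \ {v} := by
  intro l
  induction l with
  | nil =>
    intro a _ v hv hlast
    simp only [List.getLast_singleton] at hlast
    by_cases h : a = v
    · exact Or.inl (by simp [h])
    · exact Or.inr ⟨hlast, h⟩
  | cons b l' ih =>
    intro a hchain v hv hlast
    rw [List.Chain, List.chain_cons] at hchain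
    have hlast' : (b :: l').getLast (by simp) ∈ G.Sc v := by
      rwa [List.getLast_cons (by simp)] at hlast
    rcases ih b hchain.2 v hv hlast' with h | h
    · exact Or.inl (List.mem_cons_of_mem _ h)
    · obtain ⟨k, hk⟩ := List.mem_iff_getElem?.mp hchain.1
      obtain ⟨_, _, hnest, hclosed, _, _⟩ := G.conds
      have ha : a ∈ G.Sc v := hclosed v a b k hv hk h
      by_cases h' : a = v
      · exact Or.inl (by simp [h'])
      · exact Or.inr ⟨ha, h'⟩

/-- Along a chain of edges, two distinct binders of the last vertex are comparable,
    or both strictly scope the starting vertex. -/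
lemma lhotg_aux_cmp : ∀ (l : List V) (a : V), List.Chain G.Edge a l →
    ∀ v₁ v₂, G.lab v₁ = .lam → G.lab v₂ = .lam → v₁ ≠ v₂ →
    (a :: l).getLast (by simp) ∈ G.Sc v₁ → (a :: l).getLast (by simp) ∈ G.Sc v₂ →
    (v₁ ∈ G.Sc v₂ \ {v₂} ∨ v₂ ∈ G.Sc v₁ \ {v₁}) ∨
      (a ∈ G.Sc v₁ \ {v₁} ∧ a ∈ G.Sc v₂ \ {v₂}) := by
  intro l
  induction l with
  | nil =>
    intro a _ v₁ v₂ hv₁ hv₂ hne h₁ h₂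
    simp only [List.getLast_singleton] at h₁ h₂
    by_cases e₁ : a = v₁
    · exact Or.inl (Or.inl ⟨e₁ ▸ h₂, e₁ ▸ hne⟩)
    by_cases e₂ : a = v₂
    · exact Or.inl (Or.inr ⟨e₂ ▸ h₁, e₂ ▸ hne.symm⟩)
    exact Or.inr ⟨⟨h₁, e₁⟩, ⟨h₂, e₂⟩⟩
  | cons b l' ih =>
    intro a hchain v₁ v₂ hv₁ hv₂ hne h₁ h₂
    rw [List.Chain, List.chain_cons] at hchain
    rw [List.getLast_cons (by simp)] at h₁ h₂
    rcases ih b hchain.2 v₁ v₂ hv₁ hv₂ hne h₁ h₂ with h | ⟨hb₁, hb₂⟩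
    · exact Or.inl h
    · obtain ⟨k, hk⟩ := List.mem_iff_getElem?.mp hchain.1
      obtain ⟨_, _, hnest, hclosed, _, _⟩ := G.conds
      have ha₁ : a ∈ G.Sc v₁ := hclosed v₁ a b k hv₁ hk hb₁
      have ha₂ : a ∈ G.Sc v₂ := hclosed v₂ a b k hv₂ hk hb₂
      by_cases e₁ : a = v₁
      · exact Or.inl (Or.inl ⟨e₁ ▸ ha₂, e₁ ▸ hne⟩)
      by_cases e₂ : a = v₂
      · exact Or.inl (Or.inr ⟨e₂ ▸ ha₁, e₂ ▸ hne.symm⟩)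
      exact Or.inr ⟨⟨ha₁, e₁⟩, ⟨ha₂, e₂⟩⟩

end Aux

/-- Lemma 2.1(iii): the binders of a vertex with nonempty binder set can be listed as
    v₀, …, v_n with strictly linearly nested scopes Sc(v_n) ⊊ … ⊊ Sc(v₀). -/
theorem lhotg_binders_linearly_nested :
    ∀ i ∈ ({0, 1} : Set ℕ), ∀ (V : Type) (G : LamHoTG i V), ∀ w : V,
      {v : V | G.lab v = Lab3.lam ∧ w ∈ G.Sc v}.Nonempty →
      ∃ (n : ℕ) (f : Fin (n + 1) → V),
        {v : V | G.lab v = Lab3.lam ∧ w ∈ G.Sc v} = Set.range f ∧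
        ∀ m m' : Fin (n + 1), m < m' → G.Sc (f m') ⊂ G.Sc (f m) := by
  intro i _ V G w hw
  classical
  set B : Set V := {v : V | G.lab v = Lab3.lam ∧ w ∈ G.Sc v} with hB
  obtain ⟨hroot, hself, hnest, hclosed, _, _⟩ := G.conds
  -- a path from the root to w
  obtain ⟨l, hchain, hlastl⟩ :=
    List.exists_isChain_cons_of_relationReflTransGen (G.reach w)
  have hmemB : ∀ v ∈ B, v ∈ G.root :: l := by
    intro v hv
    rcases lhotg_aux_mem G l G.root hchain v hv.1 (by rw [hlastl]; exact hv.2) with h | h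
    · exact h
    · exact absurd h (hroot v hv.1)
  have hBfin : B.Finite := (List.finite_toSet (G.root :: l)).subset hmemB
  -- comparability of scopes of distinct binders
  have hcmp : ∀ v₁ ∈ B, ∀ v₂ ∈ B, v₁ ≠ v₂ →
      G.Sc v₁ ⊂ G.Sc v₂ ∨ G.Sc v₂ ⊂ G.Sc v₁ := by
    intro v₁ hv₁ v₂ hv₂ hne
    have key : v₁ ∈ G.Sc v₂ \ {v₂} ∨ v₂ ∈ G.Sc v₁ \ {v₁} := by
      rcases lhotg_aux_cmp G l G.root hchain v₁ v₂ hv₁.1 hv₂.1 hne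
          (by rw [hlastl]; exact hv₁.2) (by rw [hlastl]; exact hv₂.2) with h | ⟨h₁, _⟩
      · exact h
      · exact absurd h₁ (hroot v₁ hv₁.1)
    have sub : ∀ a b : V, G.lab a = Lab3.lam → G.lab b = Lab3.lam →
        a ∈ G.Sc b \ {b} → G.Sc a ⊂ G.Sc b := by
      intro a b ha hb hab
      have hs : G.Sc a ⊆ G.Sc b \ {b} := hnest b a hb ha hab
      refine ⟨hs.trans Set.diff_subset, fun hcon => ?_⟩
      have : b ∈ G.Sc b \ {b} := hs (hcon (hself b hb))
      exact this.2 rfl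
    rcases key with h | h
    · exact Or.inl (sub v₁ v₂ hv₁.1 hv₂.1 h)
    · exact Or.inr (sub v₂ v₁ hv₂.1 hv₁.1 h)
  haveI : Fintype ↥B := hBfin.fintype
  haveI : Nonempty ↥B := hw.to_subtype
  -- a linear order on the binders by reverse strict scope inclusion
  letI : LinearOrder ↥B :=
    { le := fun a b => a = b ∨ G.Sc (b : V) ⊂ G.Sc (a : V)
      lt := fun a b => G.Sc (b : V) ⊂ G.Sc (a : V)
      le_refl := fun a => Or.inl rfl
      le_trans := by
        rintro a b c (rfl | hab) h
        · exact h
        · rcases h with rfl | hbc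
          · exact Or.inr hab
          · exact Or.inr (ssubset_trans hbc hab)
      le_antisymm := by
        rintro a b (rfl | hab) h
        · rfl
        · rcases h with rfl | hba
          · rfl
          · exact absurd hba (ssubset_asymm hab)
      le_total := by
        intro a b
        by_cases h : a = b
        · exact Or.inl (Or.inl h)
        · rcases hcmp a.val a.2 b.val b.2 (fun e => h (Subtype.ext e)) with h' | h'
          · exact Or.inr (Or.inr h')
          · exact Or.inl (Or.inr h')
      lt_iff_le_not_ge := by
        intro a b
        constructor
        · intro h
          refine ⟨Or.inr h, ?_⟩
          rintro (rfl | h')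
          · exact ssubset_irrefl _ h
          · exact ssubset_asymm h h'
        · rintro ⟨rfl | h, hn⟩
          · exact absurd (Or.inl rfl) hn
          · exact h
      toDecidableLE := fun _ _ => Classical.dec _ }
  set c := Fintype.card ↥B with hc
  have hcpos : 0 < c := Fintype.card_pos
  have hcard : Fintype.card ↥B = (c - 1) + 1 := by omega
  let e := monoEquivOfFin ↥B hcard
  refine ⟨c - 1, fun m => (e m : V), ?_, ?_⟩
  · ext x
    constructor
    · intro hx
      exact ⟨e.symm ⟨x, hx⟩, by simp⟩
    · rintro ⟨m, rfl⟩
      exact (e m).2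
  · intro m m' hmm'
    exact e.strictMono hmm'
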